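/- Let K ⊂ ℝ^N be a convex body containing the origin in its interior and let G ⊂ ℝ^N be a convex body. Let x ∈ ∂G and suppose that ν ∈ S^{N−1} is the unique unit vector w for which the half-space {y : ⟨y − x, w⟩ ≥ 0} contains G (i.e. G has a unique supporting hyperplane at x, with inward unit normal ν). Then lim_{r→0⁺} vol(G ∩ (x + rK)) / vol(rK) = vol(K ∩ H_ν⁺) / vol(K), where H_ν⁺ = {y ∈ ℝ^N : ⟨y, ν⟩ ≥ 0}. -/

import Mathlib

open MeasureTheory Set Pointwise Filter
open scoped ENNReal Topology

/-- **Theorem 3.1 (first-order asymptotics).** Let `K ⊂ ℝ^N` be a convex body containing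
the origin in its interior and `G ⊂ ℝ^N` a convex body.  Let `x ∈ ∂G` and suppose `ν` is
the unique inward unit normal of `G` at `x`.  Then
`vol(G ∩ (x + rK)) / vol(rK) → vol(K ∩ H_ν⁺) / vol(K)` as `r → 0⁺`. -/
theorem density_first_order_limit
    (N : ℕ) (K G : Set (EuclideanSpace ℝ (Fin N)))
    (hK_conv : Convex ℝ K) (hK_comp : IsCompact K)
    (hK0 : (0 : EuclideanSpace ℝ (Fin N)) ∈ interior K)
    (hG_conv : Convex ℝ G) (hG_comp : IsCompact G)
    (hG_int : (interior G).Nonempty)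
    (x : EuclideanSpace ℝ (Fin N)) (hx : x ∈ frontier G)
    (ν : EuclideanSpace ℝ (Fin N))
    (hν : {w : EuclideanSpace ℝ (Fin N) | ‖w‖ = 1 ∧
        ∀ y ∈ G, 0 ≤ (inner ℝ (y - x) w : ℝ)} = {ν}) :
    Tendsto (fun r : ℝ => volume (G ∩ (x +ᵥ r • K)) / volume (r • K))
      (𝓝[>] (0 : ℝ))
      (𝓝 (volume (K ∩ {y | 0 ≤ (inner ℝ y ν : ℝ)}) / volume K)) := by
  classical
  set H : Set (EuclideanSpace ℝ (Fin N)) := {y | 0 ≤ (inner ℝ y ν : ℝ)} with hHdef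
  -- basic facts about ν
  have hνmem : ν ∈ {w : EuclideanSpace ℝ (Fin N) | ‖w‖ = 1 ∧ ∀ y ∈ G, 0 ≤ (inner ℝ (y - x) w : ℝ)} := by
    rw [hν]; rfl
  obtain ⟨hν1, hνsupp⟩ := hνmem
  have hxG : x ∈ G := by
    have h1 : x ∈ closure G := frontier_subset_closure hx
    rwa [hG_comp.isClosed.closure_eq] at h1
  -- the translated body
  set D : Set (EuclideanSpace ℝ (Fin N)) := (-x) +ᵥ G with hDdef
  have hD0 : (0 : EuclideanSpace ℝ (Fin N)) ∈ D := ⟨x, hxG, by simp⟩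
  have hDconv : Convex ℝ D := by
    rw [hDdef, ← Set.image_vadd]
    exact hG_conv.translate (-x)
  have hDsupp : ∀ d ∈ D, 0 ≤ (inner ℝ d ν : ℝ) := by
    rintro d ⟨g, hg, rfl⟩
    simpa [vadd_eq_add, ← sub_eq_neg_add] using hνsupp g hg
  -- monotonicity of dilates
  have hmono : ∀ a b : ℝ, 0 < a → a ≤ b → a • D ⊆ b • D := by
    rintro a b ha hab y ⟨d, hd, rfl⟩
    have hb : 0 < b := ha.trans_le hab
    refine ⟨(a / b) • d, hDconv.smul_mem_of_zero_mem hD0 hd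
      ⟨by positivity, div_le_one_of_le₀ hab hb.le⟩, ?_⟩
    show b • ((a / b) • d) = a • d
    rw [smul_smul, mul_div_cancel₀ _ hb.ne']
  -- the blow-up cone
  set C : Set (EuclideanSpace ℝ (Fin N)) := ⋃ n : ℕ, ((n : ℝ) + 1) • D with hCdef
  have hDC : D ⊆ C := by
    intro d hd
    refine Set.mem_iUnion.2 ⟨0, ?_⟩
    simpa using hd
  have hC0 : (0 : EuclideanSpace ℝ (Fin N)) ∈ C := hDC hD0
  have hsubC : ∀ t : ℝ, 0 < t → t • D ⊆ C := by
    intro t ht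
    obtain ⟨n, hn⟩ := exists_nat_ge t
    refine (hmono t ((n : ℝ) + 1) ht (hn.trans (by linarith))).trans ?_
    exact Set.subset_iUnion (fun n : ℕ => ((n : ℝ) + 1) • D) n
  have hCscale : ∀ c : ℝ, 0 < c → ∀ y ∈ C, c • y ∈ C := by
    intro c hc y hy
    obtain ⟨n, hn⟩ := Set.mem_iUnion.1 hy
    have h1 : c • y ∈ (c * ((n : ℝ) + 1)) • D := by
      rw [← smul_smul]; exact Set.smul_mem_smul_set hn
    exact hsubC _ (by positivity) h1
  have hCconv : Convex ℝ C := by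
    intro y hy z hz a b ha hb hab
    obtain ⟨n, hn⟩ := Set.mem_iUnion.1 hy
    obtain ⟨m, hm⟩ := Set.mem_iUnion.1 hz
    set p : ℝ := (max n m : ℕ) + 1 with hp
    have hpn : ((n : ℝ) + 1) ≤ p := by
      have : (n : ℝ) ≤ ((max n m : ℕ) : ℝ) := by exact_mod_cast Nat.le_max_left n m
      rw [hp]; linarith
    have hpm : ((m : ℝ) + 1) ≤ p := by
      have : (m : ℝ) ≤ ((max n m : ℕ) : ℝ) := by exact_mod_cast Nat.le_max_right n m
      rw [hp]; linarith
    have hy' : y ∈ p • D := hmono _ _ (by positivity) hpn hn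
    have hz' : z ∈ p • D := hmono _ _ (by positivity) hpm hm
    have : a • y + b • z ∈ p • D := (hDconv.smul p) hy' hz' ha hb hab
    exact hsubC p (by positivity) this
  -- C ⊆ H
  have hCH : C ⊆ H := by
    intro y hy
    obtain ⟨n, ⟨d, hd, rfl⟩⟩ := Set.mem_iUnion.1 hy
    have : (inner ℝ (((n : ℝ) + 1) • d) ν : ℝ) = ((n : ℝ) + 1) * inner ℝ d ν :=
      real_inner_smul_left _ _ _
    rw [hHdef, Set.mem_setOf_eq, this]
    have := hDsupp d hd
    positivity
  -- H ⊆ closure C, via separation and uniqueness of the normal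
  have hHC : H ⊆ closure C := by
    intro z hz
    by_contra hzC
    obtain ⟨f, u, hfC, hfz⟩ :=
      geometric_hahn_banach_closed_point (hCconv.closure) isClosed_closure hzC
    have hu0 : 0 < u := by
      have := hfC 0 (subset_closure hC0)
      simpa using this
    have hfle : ∀ y ∈ C, f y ≤ 0 := by
      intro y hy
      by_contra hpos
      push_neg at hpos
      have hc : 0 < (u + 1) / f y := by positivity
      have h1 : ((u + 1) / f y) • y ∈ C := hCscale _ hc y hy
      have h2 : f (((u + 1) / f y) • y) < u := hfC _ (subset_closure h1)
      rw [f.map_smul, smul_eq_mul, div_mul_cancel₀ _ hpos.ne'] at h2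
      linarith
    -- Riesz representation
    set w : EuclideanSpace ℝ (Fin N) := (InnerProductSpace.toDual ℝ (EuclideanSpace ℝ (Fin N))).symm f with hw
    have hwf : ∀ y : EuclideanSpace ℝ (Fin N), (inner ℝ w y : ℝ) = f y := fun y =>
      InnerProductSpace.toDual_symm_apply
    have hwne : w ≠ 0 := by
      intro h0
      have : f z = 0 := by rw [← hwf, h0]; simp
      rw [this] at hfz; linarith
    set v : EuclideanSpace ℝ (Fin N) := ‖w‖⁻¹ • (-w) with hv
    have hvnorm : ‖v‖ = 1 := by
      rw [hv, norm_smul, norm_neg, norm_inv, norm_norm,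
        inv_mul_cancel₀ (norm_ne_zero_iff.2 hwne)]
    have hvsupp : ∀ y ∈ G, 0 ≤ (inner ℝ (y - x) v : ℝ) := by
      intro y hy
      have hyD : y - x ∈ D := ⟨y, hy, by simp [vadd_eq_add, sub_eq_neg_add]⟩
      have h1 : f (y - x) ≤ 0 := hfle _ (hDC hyD)
      have h2 : (inner ℝ (y - x) v : ℝ) = ‖w‖⁻¹ * (-(f (y - x))) := by
        rw [hv, real_inner_smul_right, inner_neg_right, real_inner_comm, hwf]
      rw [h2]
      have : 0 ≤ -(f (y - x)) := by linarith
      positivity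
    have hveq : v = ν := by
      have : v ∈ {w : EuclideanSpace ℝ (Fin N) | ‖w‖ = 1 ∧ ∀ y ∈ G, 0 ≤ (inner ℝ (y - x) w : ℝ)} :=
        ⟨hvnorm, hvsupp⟩
      rwa [hν, Set.mem_singleton_iff] at this
    -- contradiction: f z ≤ 0 but f z > u > 0
    have hwνeq : w = -(‖w‖ • ν) := by
      have h1 : ‖w‖ • v = -w := by
        rw [hv, smul_smul, mul_inv_cancel₀ (norm_ne_zero_iff.2 hwne), one_smul]
      rw [hveq] at h1
      rw [h1, neg_neg]
    have hfz0 : f z ≤ 0 := by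
      rw [← hwf, hwνeq]
      have : (inner ℝ (-(‖w‖ • ν)) z : ℝ) = -(‖w‖ * inner ℝ ν z) := by
        rw [inner_neg_left, real_inner_smul_left]
      rw [this]
      have hz' : 0 ≤ (inner ℝ z ν : ℝ) := hz
      rw [real_inner_comm] at hz'
      have : 0 ≤ ‖w‖ * (inner ℝ ν z : ℝ) := by positivity
      linarith
    linarith
  -- measure of the cone equals measure of the half-space (within K)
  have hmeas : volume (K ∩ H) = volume (K ∩ C) := by
    apply le_antisymm
    · calc volume (K ∩ H) ≤ volume ((K ∩ C) ∪ frontier C) := by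
            apply measure_mono
            rintro y ⟨hyK, hyH⟩
            rcases Classical.em (y ∈ C) with h | h
            · exact Or.inl ⟨hyK, h⟩
            · right
              exact ⟨hHC hyH, fun hint => h (interior_subset hint)⟩
      _ ≤ volume (K ∩ C) + volume (frontier C) := measure_union_le _ _
      _ = volume (K ∩ C) := by rw [hCconv.addHaar_frontier volume, add_zero]
    · exact measure_mono (Set.inter_subset_inter_right _ hCH)
  -- positivity and finiteness of vol K
  have hKpos : volume K ≠ 0 :=
    (Measure.measure_pos_of_nonempty_interior _ ⟨0, hK0⟩).ne'
  have hKfin : volume K ≠ ⊤ := hK_comp.measure_lt_top.ne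
  -- scaling identity
  have hscale : ∀ r : ℝ, 0 < r →
      volume (G ∩ (x +ᵥ r • K)) / volume (r • K)
        = volume (K ∩ r⁻¹ • D) / volume K := by
    intro r hr
    have hG_eq : G = x +ᵥ D := by
      rw [hDdef, vadd_vadd]
      simp
    have h1 : G ∩ (x +ᵥ r • K) = x +ᵥ (D ∩ r • K) := by
      rw [hG_eq, Set.vadd_set_inter]
    have h2 : D ∩ r • K = r • (r⁻¹ • D ∩ K) := by
      rw [Set.smul_set_inter₀ hr.ne', smul_smul, mul_inv_cancel₀ hr.ne', one_smul,
        Set.inter_comm]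
    have h3 : volume (G ∩ (x +ᵥ r • K)) =
        ENNReal.ofReal (r ^ N) * volume (K ∩ r⁻¹ • D) := by
      rw [h1, measure_vadd, h2, Measure.addHaar_smul_of_nonneg volume hr.le,
        finrank_euclideanSpace_fin, Set.inter_comm]
    have h4 : volume (r • K) = ENNReal.ofReal (r ^ N) * volume K := by
      rw [Measure.addHaar_smul_of_nonneg volume hr.le, finrank_euclideanSpace_fin]
    rw [h3, h4, ENNReal.mul_div_mul_left _ _ (by simp [hr, pow_pos]) ENNReal.ofReal_ne_top]
  -- the main monotone-convergence limit
  have hUnion : (⋃ n : ℕ, K ∩ ((n : ℝ) + 1) • D) = K ∩ C := by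
    rw [hCdef, Set.inter_iUnion]
  have hmonoseq : Monotone fun n : ℕ => K ∩ ((n : ℝ) + 1) • D := by
    intro n m hnm
    apply Set.inter_subset_inter_right
    have h1 : (n : ℝ) ≤ (m : ℝ) := by exact_mod_cast hnm
    exact hmono _ _ (by positivity) (by linarith)
  have hseq : Tendsto (fun n : ℕ => volume (K ∩ ((n : ℝ) + 1) • D)) atTop
      (𝓝 (volume (K ∩ C))) := by
    have := tendsto_measure_iUnion_atTop (μ := volume) hmonoseq
    rwa [hUnion] at this
  have hmain : Tendsto (fun r : ℝ => volume (K ∩ r⁻¹ • D)) (𝓝[>] (0 : ℝ))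
      (𝓝 (volume (K ∩ C))) := by
    rw [tendsto_order]
    constructor
    · intro a ha
      obtain ⟨n, hn⟩ := (hseq.eventually (eventually_gt_nhds ha)).exists
      filter_upwards [Ioo_mem_nhdsGT_of_mem
        (⟨le_refl (0 : ℝ), by positivity⟩ : (0 : ℝ) ∈ Set.Ico 0 ((n : ℝ) + 1)⁻¹)]
        with r hr
      have hr0 : 0 < r := hr.1
      have hrinv : (n : ℝ) + 1 ≤ r⁻¹ := by
        rw [← inv_inv ((n : ℝ) + 1)]
        exact (inv_le_inv₀ (by positivity) hr0).2 hr.2.le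
      exact hn.trans_le (measure_mono (Set.inter_subset_inter_right _
        (hmono _ _ (by positivity) hrinv)))
    · intro a ha
      filter_upwards [self_mem_nhdsWithin] with r hr
      have hr0 : (0 : ℝ) < r := hr
      have : volume (K ∩ r⁻¹ • D) ≤ volume (K ∩ C) :=
        measure_mono (Set.inter_subset_inter_right _ (hsubC _ (by positivity)))
      exact this.trans_lt ha
  -- conclude
  rw [show volume (K ∩ H) = volume (K ∩ C) from hmeas]
  have hdiv : Tendsto (fun r : ℝ => volume (K ∩ r⁻¹ • D) / volume K)
      (𝓝[>] (0 : ℝ)) (𝓝 (volume (K ∩ C) / volume K)) :=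
    ENNReal.Tendsto.div_const hmain (Or.inr hKpos)
  apply hdiv.congr'
  filter_upwards [self_mem_nhdsWithin] with r hr
  exact (hscale r hr).symm
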